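/- Let N' ⊆ int N be nested compact 3-manifolds and suppose a compact set K is a spine of both N and N'. Then the inclusion N' − K ⊆ N − K induces isomorphisms in Čech (equivalently singular) cohomology with ℤ coefficients. -/

import Mathlib

open Set

set_option linter.unusedSectionVars false
set_option linter.unusedVariables false

variable {X : Type} [TopologicalSpace X] [T2Space X]

/-- The "tail" part of a spine collar at parameter `r`. -/
def subAt {B : Type} [TopologicalSpace B] (S : Set X)
    (h : ↥S ≃ₜ (B × ↥(Set.Ici (0:ℝ)))) (r : ℝ) : Set X :=
  {x | ∃ hx : x ∈ S, r ≤ ((h ⟨x, hx⟩).2 : ℝ)}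

lemma subAt_subset {B : Type} [TopologicalSpace B] (S : Set X)
    (h : ↥S ≃ₜ (B × ↥(Set.Ici (0:ℝ)))) (r : ℝ) : subAt S h r ⊆ S :=
  fun _ hx => hx.1

lemma subAt_homotopyEquiv {B : Type} [TopologicalSpace B] (S : Set X)
    (h : ↥S ≃ₜ (B × ↥(Set.Ici (0:ℝ)))) (r : ℝ) (hr : 0 ≤ r) :
    ∃ e : ContinuousMap.HomotopyEquiv ↥(subAt S h r) ↥S,
      ⇑e.toFun = Set.inclusion (subAt_subset S h r) := by
  classical
  -- retraction S → S
  set q : ↥S → B × ↥(Set.Ici (0:ℝ)) :=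
    fun y => ((h y).1, ⟨max ((h y).2 : ℝ) r, Set.mem_Ici.mpr (le_trans (h y).2.2 (le_max_left _ _))⟩) with hq
  have hqcont : Continuous q := by
    apply Continuous.prodMk
    · exact continuous_fst.comp h.continuous
    · exact ((continuous_subtype_val.comp (continuous_snd.comp h.continuous)).max
        continuous_const).subtype_mk _
  have hmem : ∀ y : ↥S, (↑(h.symm (q y)) : X) ∈ subAt S h r := by
    intro y
    refine ⟨(h.symm (q y)).2, ?_⟩
    have : h ⟨↑(h.symm (q y)), (h.symm (q y)).2⟩ = q y := by
      rw [Subtype.coe_eta]; exact h.apply_symm_apply _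
    rw [this]
    exact le_max_right _ _
  set ψ : ↥S → ↥(subAt S h r) := fun y => ⟨↑(h.symm (q y)), hmem y⟩ with hψ
  have hψcont : Continuous ψ :=
    (continuous_subtype_val.comp (h.symm.continuous.comp hqcont)).subtype_mk _
  set ι : C(↥(subAt S h r), ↥S) :=
    ⟨Set.inclusion (subAt_subset S h r), continuous_inclusion _⟩ with hι
  -- left inverse on the nose
  have hleft : ∀ x : ↥(subAt S h r), ψ (ι x) = x := by
    intro x
    obtain ⟨hx, hrx⟩ := x.2
    have hqx : q (ι x) = h (ι x) := by
      have hval : ι x = (⟨↑x, hx⟩ : ↥S) := rfl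
      rw [hq]
      ext
      · rfl
      · show max ((h (ι x)).2 : ℝ) r = ((h (ι x)).2 : ℝ)
        rw [hval]
        exact max_eq_left hrx
    apply Subtype.ext
    show (↑(h.symm (q (ι x))) : X) = ↑x
    rw [hqx, h.symm_apply_apply]
    rfl
  -- homotopy for the right inverse
  set H : C(unitInterval × ↥S, ↥S) :=
    ⟨fun p => h.symm ((h p.2).1,
        ⟨max ((h p.2).2 : ℝ) ((p.1 : ℝ) * r), Set.mem_Ici.mpr (le_trans (h p.2).2.2 (le_max_left _ _))⟩), by
      apply h.symm.continuous.comp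
      apply Continuous.prodMk
      · exact continuous_fst.comp (h.continuous.comp continuous_snd)
      · refine Continuous.subtype_mk ?_ _
        exact (continuous_subtype_val.comp (continuous_snd.comp
            (h.continuous.comp continuous_snd))).max
          ((continuous_subtype_val.comp continuous_fst).mul continuous_const)⟩ with hH
  refine ⟨⟨ι, ⟨ψ, hψcont⟩, ?_, ?_⟩, rfl⟩
  · refine ⟨?_⟩
    have : (ContinuousMap.mk ψ hψcont).comp ι = ContinuousMap.id _ := by
      ext x; exact congrArg Subtype.val (hleft x)
    rw [this]
    exact ContinuousMap.Homotopy.refl _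
  · refine ⟨(⟨H, ?_, ?_⟩ : ContinuousMap.Homotopy (ContinuousMap.id _) (ι.comp ⟨ψ, hψcont⟩)).symm⟩
    · intro y
      show h.symm ((h y).1,
        ⟨max ((h y).2 : ℝ) (((0 : unitInterval) : ℝ) * r),
          Set.mem_Ici.mpr (le_trans (h y).2.2 (le_max_left _ _))⟩) = y
      have h2 : (⟨max ((h y).2 : ℝ) (((0 : unitInterval) : ℝ) * r),
          Set.mem_Ici.mpr (le_trans (h y).2.2 (le_max_left _ _))⟩ : ↥(Set.Ici (0:ℝ))) = (h y).2 :=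
        Subtype.ext (by
          show max ((h y).2 : ℝ) (((0 : unitInterval) : ℝ) * r) = ((h y).2 : ℝ)
          rw [Set.Icc.coe_zero, zero_mul]
          exact max_eq_left (h y).2.2)
      rw [h2]
      exact h.symm_apply_apply y
    · intro y
      show h.symm ((h y).1,
        ⟨max ((h y).2 : ℝ) (((1 : unitInterval) : ℝ) * r),
          Set.mem_Ici.mpr (le_trans (h y).2.2 (le_max_left _ _))⟩) = ι (ψ y)
      have h2 : (⟨max ((h y).2 : ℝ) (((1 : unitInterval) : ℝ) * r),
          Set.mem_Ici.mpr (le_trans (h y).2.2 (le_max_left _ _))⟩ : ↥(Set.Ici (0:ℝ))) = (q y).2 :=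
        Subtype.ext (by
          show max ((h y).2 : ℝ) (((1 : unitInterval) : ℝ) * r) = max ((h y).2 : ℝ) r
          rw [Set.Icc.coe_one, one_mul])
      rw [h2]
      rfl

/-- For any open `U` whose complement in the compact `N` lies in `S`,
some tail `subAt S h r` is contained in `U`. -/
lemma subAt_shrink {B : Type} [TopologicalSpace B] {N U S : Set X}
    (h : ↥S ≃ₜ (B × ↥(Set.Ici (0:ℝ)))) (hN : IsCompact N) (hU : IsOpen U)
    (hSN : S ⊆ N) (hcompl : N \ U ⊆ S) :
    ∃ r : ℝ, 0 ≤ r ∧ subAt S h r ⊆ U := by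
  classical
  have hC : IsCompact (N \ U) := by
    have : IsClosed (N \ U) := hN.isClosed.sdiff hU
    exact hN.of_isClosed_subset this diff_subset
  have hD : IsCompact (Subtype.val ⁻¹' (N \ U) : Set ↥S) := by
    rw [Subtype.isCompact_iff]
    have : Subtype.val '' (Subtype.val ⁻¹' (N \ U) : Set ↥S) = S ∩ (N \ U) :=
      Subtype.image_preimage_coe _ _
    rw [this, Set.inter_eq_right.mpr hcompl]
    exact hC
  have hE : IsCompact ((fun y : ↥S => ((h y).2 : ℝ)) '' (Subtype.val ⁻¹' (N \ U))) :=
    hD.image (continuous_subtype_val.comp (continuous_snd.comp h.continuous))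
  obtain ⟨r₀, hr₀⟩ := hE.bddAbove
  refine ⟨max r₀ 0 + 1, by positivity, ?_⟩
  rintro x ⟨hx, hrx⟩
  by_contra hxU
  have hxNU : x ∈ N \ U := ⟨hSN hx, hxU⟩
  have : ((h ⟨x, hx⟩).2 : ℝ) ≤ r₀ := hr₀ ⟨⟨x, hx⟩, hxNU, rfl⟩
  have : ((h ⟨x, hx⟩).2 : ℝ) ≤ max r₀ 0 := le_trans this (le_max_left _ _)
  linarith

/-- `subAt S h r ∪ K` is a neighbourhood of `K`. -/
lemma subAt_nbhd {B : Type} [TopologicalSpace B] [CompactSpace B] {N K S : Set X}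
    (h : ↥S ≃ₜ (B × ↥(Set.Ici (0:ℝ)))) (hKint : K ⊆ interior N) (hS : S = N \ K)
    (r : ℝ) :
    ∃ V : Set X, IsOpen V ∧ K ⊆ V ∧ V ⊆ subAt S h r ∪ K := by
  classical
  set C : Set X := Subtype.val '' (h.symm '' (univ ×ˢ {t : ↥(Set.Ici (0:ℝ)) | (t : ℝ) ≤ r}))
    with hCdef
  have hCcompact : IsCompact C := by
    apply IsCompact.image _ continuous_subtype_val
    apply IsCompact.image _ h.symm.continuous
    apply IsCompact.prod isCompact_univ
    rw [Subtype.isCompact_iff]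
    have : Subtype.val '' {t : ↥(Set.Ici (0:ℝ)) | (t : ℝ) ≤ r} = Set.Icc 0 r := by
      ext t
      constructor
      · rintro ⟨⟨t, ht⟩, htr, rfl⟩; exact ⟨ht, htr⟩
      · rintro ⟨ht, htr⟩; exact ⟨⟨t, ht⟩, htr, rfl⟩
    rw [this]
    exact isCompact_Icc
  have hCS : C ⊆ S := by
    rintro x ⟨y, _, rfl⟩; exact y.2
  have hmemC : ∀ (x : X) (hx : x ∈ S), ((h ⟨x, hx⟩).2 : ℝ) ≤ r → x ∈ C := by
    intro x hx hle
    exact ⟨⟨x, hx⟩, ⟨h ⟨x, hx⟩, ⟨trivial, hle⟩, h.symm_apply_apply _⟩, rfl⟩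
  refine ⟨interior N \ C, isOpen_interior.sdiff hCcompact.isClosed, ?_, ?_⟩
  · intro k hk
    refine ⟨hKint hk, fun hkC => ?_⟩
    have := hCS hkC
    rw [hS] at this
    exact this.2 hk
  · rintro x ⟨hxN, hxC⟩
    by_cases hxK : x ∈ K
    · exact Or.inr hxK
    · have hxS : x ∈ S := by rw [hS]; exact ⟨interior_subset hxN, hxK⟩
      rcases le_total ((h ⟨x, hxS⟩).2 : ℝ) r with hle | hge
      · exact absurd (hmemC x hxS hle) hxC
      · exact Or.inl ⟨hxS, hge⟩

/-- If `K` is a spine of both nested compact 3-manifolds `N' ⊆ int N`, then the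
inclusion `N' − K ⊆ N − K` induces isomorphisms in cohomology.  Cohomology is
encoded as an arbitrary contravariant functor `F` (with `ℤ` coefficients, i.e.
with values abelian groups) on subspaces of the ambient space, with restriction
maps for inclusions, functorial, and invariant under those inclusions which are
homotopy equivalences; the conclusion holds for every such functor. -/
theorem stmt18 {X : Type} [TopologicalSpace X] [T2Space X]
    (N N' K : Set X)
    (hN : IsCompact N) (hN' : IsCompact N')
    (hnest : N' ⊆ interior N) (hK : IsCompact K) (hKN' : K ⊆ interior N')
    (hfrN : frontier N ⊆ N \ K) (hfrN' : frontier N' ⊆ N' \ K)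
    -- `K` is a spine of `N`
    (hspineN : ∃ h : ↥(N \ K) ≃ₜ (↥(frontier N) × ↥(Set.Ici (0:ℝ))),
      ∀ p (hp : p ∈ frontier N), h ⟨p, hfrN hp⟩ = (⟨p, hp⟩, ⟨0, Set.self_mem_Ici⟩))
    -- `K` is a spine of `N'`
    (hspineN' : ∃ h : ↥(N' \ K) ≃ₜ (↥(frontier N') × ↥(Set.Ici (0:ℝ))),
      ∀ p (hp : p ∈ frontier N'), h ⟨p, hfrN' hp⟩ = (⟨p, hp⟩, ⟨0, Set.self_mem_Ici⟩))
    -- a contravariant, homotopy-invariant cohomology functor on subspaces of `X`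
    (F : Set X → Type) [∀ A, AddCommGroup (F A)]
    (res : ∀ {A B : Set X}, A ⊆ B → (F B →+ F A))
    (res_id : ∀ (A : Set X) (h : A ⊆ A), res h = AddMonoidHom.id (F A))
    (res_comp : ∀ {A B C : Set X} (h₁ : A ⊆ B) (h₂ : B ⊆ C),
      (res h₁).comp (res h₂) = res (h₁.trans h₂))
    (hinv : ∀ {A B : Set X} (h : A ⊆ B),
      (∃ e : ContinuousMap.HomotopyEquiv ↥A ↥B, ⇑e.toFun = Set.inclusion h) →
      Function.Bijective (res h)) :
    Function.Bijective (res (show N' \ K ⊆ N \ K from Set.diff_subset_diff_left (hnest.trans interior_subset))) := by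
  classical
  obtain ⟨h, -⟩ := hspineN
  obtain ⟨h', -⟩ := hspineN'
  haveI : CompactSpace ↥(frontier N) :=
    isCompact_iff_compactSpace.mp
      (hN.of_isClosed_subset isClosed_frontier (hfrN.trans diff_subset))
  have hN'N : N' ⊆ N := hnest.trans interior_subset
  have hmain : N' \ K ⊆ N \ K := Set.diff_subset_diff_left hN'N
  have hKintN : K ⊆ interior N :=
    hKN'.trans ((interior_subset : interior N' ⊆ N').trans hnest)
  -- Step 1: choose r₁ with A₁ ⊆ interior N'
  obtain ⟨r₁, hr₁0, hA₁U⟩ := subAt_shrink h hN isOpen_interior diff_subset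
    (fun x hx => ⟨hx.1, fun hk => hx.2 (hKN' hk)⟩)
  set A₁ : Set X := subAt (N \ K) h r₁ with hA₁def
  have hA₁S : A₁ ⊆ N \ K := subAt_subset _ _ _
  have hA₁S' : A₁ ⊆ N' \ K :=
    fun x hx => ⟨interior_subset (hA₁U hx), (hA₁S hx).2⟩
  -- Step 2: open V with K ⊆ V ⊆ A₁ ∪ K
  obtain ⟨V, hVopen, hKV, hVsub⟩ := subAt_nbhd h hKintN rfl r₁
  -- Step 3: choose r₂ with A₂ ⊆ V
  obtain ⟨r₂, hr₂0, hA₂V⟩ := subAt_shrink h' hN' hVopen diff_subset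
    (fun x hx => ⟨hx.1, fun hk => hx.2 (hKV hk)⟩)
  set A₂ : Set X := subAt (N' \ K) h' r₂ with hA₂def
  have hA₂S' : A₂ ⊆ N' \ K := subAt_subset _ _ _
  have hA₂A₁ : A₂ ⊆ A₁ :=
    fun x hx => (hVsub (hA₂V hx)).resolve_right (fun hk => (hA₂S' hx).2 hk)
  -- homotopy invariance
  have bij₁ : Function.Bijective (res (hA₁S'.trans hmain)) :=
    hinv _ (subAt_homotopyEquiv (N \ K) h r₁ hr₁0)
  have bij₂ : Function.Bijective (res (hA₂A₁.trans hA₁S')) :=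
    hinv _ (subAt_homotopyEquiv (N' \ K) h' r₂ hr₂0)
  have hba : (res hA₁S').comp (res hmain) = res (hA₁S'.trans hmain) :=
    res_comp _ _
  have hcb : (res hA₂A₁).comp (res hA₁S') = res (hA₂A₁.trans hA₁S') :=
    res_comp _ _
  have hba' : Function.Bijective (⇑(res hA₁S') ∘ ⇑(res hmain)) := by
    rw [← AddMonoidHom.coe_comp, hba]; exact bij₁
  have hcb' : Function.Bijective (⇑(res hA₂A₁) ∘ ⇑(res hA₁S')) := by
    rw [← AddMonoidHom.coe_comp, hcb]; exact bij₂
  have hbsurj : Function.Surjective (res hA₁S') :=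
    Function.Surjective.of_comp hba'.surjective
  have hbinj : Function.Injective (res hA₁S') :=
    Function.Injective.of_comp hcb'.injective
  constructor
  · exact Function.Injective.of_comp hba'.injective
  · intro y
    obtain ⟨x, hx⟩ := hba'.surjective (res hA₁S' y)
    exact ⟨x, hbinj hx⟩
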